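/- Let G be a finite abelian group and H a subgroup of G. Regard ℂ[G]⟦u⟧ as a module over ℂ[H]⟦u⟧ via the injective ring homomorphism ℂ[H]⟦u⟧ → ℂ[G]⟦u⟧ applying, coefficientwise, the inclusion-induced map ℂ[H] → ℂ[G]; for P ∈ ℂ[G]⟦u⟧ let T_{G/H}(P) ∈ ℂ[H]⟦u⟧ and N_{G/H}(P) ∈ ℂ[H]⟦u⟧ denote the trace and the determinant, over ℂ[H]⟦u⟧, of the multiplication-by-P endomorphism of ℂ[G]⟦u⟧. Then for every P ∈ ℂ[G]⟦u⟧ with zero constant coefficient, T_{G/H}(P) has zero constant coefficient and N_{G/H}(exp_{ℂ[G]}(P)) = exp_{ℂ[H]}(T_{G/H}(P)). -/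

import Mathlib

set_option synthInstance.maxHeartbeats 1000000

/-- The exponential `exp_A : uA⟦u⟧ → 1 + uA⟦u⟧`, `exp_A(Q) = ∑_{k≥0} Q^k/k!`, of a power
series `Q` (intended for `Q` with zero constant coefficient, in which case
`coeff n (Q ^ k) = 0` for `k > n` and the series converges coefficientwise, each coefficient
being given by the finite sum below). -/
noncomputable def psExp {A : Type*} [CommRing A] [Algebra ℚ A] (Q : PowerSeries A) :
    PowerSeries A :=
  PowerSeries.mk fun n =>
    ∑ k ∈ Finset.range (n + 1), (k.factorial : ℚ)⁻¹ • (PowerSeries.coeff (R := A) n) (Q ^ k)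


set_option maxHeartbeats 1000000

open PowerSeries Finset

set_option synthInstance.maxHeartbeats 1000000

open PowerSeries Finset

/-- Formal derivative of a power series over a possibly noncommutative ring. -/
noncomputable def psD {S : Type*} [Ring S] : PowerSeries S →+ PowerSeries S where
  toFun f := PowerSeries.mk fun n => (n + 1) • (coeff (R := S) (n + 1)) f
  map_zero' := by ext n; simp
  map_add' f g := by ext n; simp [smul_add]

lemma coeff_psD {S : Type*} [Ring S] (f : PowerSeries S) (n : ℕ) :
    coeff (R := S) n (psD f) = (n + 1) • coeff (R := S) (n + 1) f := by simp [psD]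

lemma psD_one {S : Type*} [Ring S] : psD (1 : PowerSeries S) = 0 := by
  ext n; simp [coeff_psD, coeff_one]

lemma psD_mul {S : Type*} [Ring S] (f g : PowerSeries S) :
    psD (f * g) = psD f * g + f * psD g := by
  ext n
  have h1 : (coeff (R := S) n) (psD f * g)
      = ∑ p ∈ antidiagonal (n + 1), p.1 • ((coeff (R := S) p.1) f * (coeff (R := S) p.2) g) := by
    rw [coeff_mul, Finset.Nat.sum_antidiagonal_succ, zero_smul, zero_add]
    refine Finset.sum_congr rfl fun p hp => ?_
    rw [coeff_psD, smul_mul_assoc]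
  have h2 : (coeff (R := S) n) (f * psD g)
      = ∑ p ∈ antidiagonal (n + 1), p.2 • ((coeff (R := S) p.1) f * (coeff (R := S) p.2) g) := by
    rw [coeff_mul, Finset.Nat.sum_antidiagonal_succ', zero_smul, zero_add]
    refine Finset.sum_congr rfl fun p hp => ?_
    dsimp only
    rw [coeff_psD, mul_smul_comm]
  rw [map_add, h1, h2, coeff_psD, coeff_mul, smul_sum, ← Finset.sum_add_distrib]
  refine Finset.sum_congr rfl fun p hp => ?_
  rw [Finset.HasAntidiagonal.mem_antidiagonal] at hp
  rw [← add_nsmul, hp]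

lemma coeff_pow_eq_zero' {S : Type*} [Ring S] {Q : PowerSeries S}
    (hQ : constantCoeff (R := S) Q = 0) : ∀ {k n : ℕ}, n < k → coeff (R := S) n (Q ^ k) = 0 := by
  intro k
  induction k with
  | zero => intro n hn; omega
  | succ k ih =>
    intro n hn
    rw [pow_succ, coeff_mul]
    refine Finset.sum_eq_zero fun p hp => ?_
    rw [Finset.HasAntidiagonal.mem_antidiagonal] at hp
    rcases Nat.eq_zero_or_pos p.2 with h | h
    · have h2 : coeff (R := S) p.2 Q = 0 := by
        rw [h]; simpa [PowerSeries.coeff_zero_eq_constantCoeff] using hQ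
      rw [h2, mul_zero]
    · rw [ih (by omega), zero_mul]

/-- The exponential of a power series over a possibly noncommutative `ℚ`-algebra. -/
noncomputable def rexp {S : Type*} [Ring S] [Algebra ℚ S] (Q : PowerSeries S) : PowerSeries S :=
  PowerSeries.mk fun n =>
    ∑ k ∈ Finset.range (n + 1), (k.factorial : ℚ)⁻¹ • (coeff (R := S) n) (Q ^ k)

lemma coeff_rexp {S : Type*} [Ring S] [Algebra ℚ S] (Q : PowerSeries S) (n : ℕ) :
    coeff (R := S) n (rexp Q) = ∑ k ∈ Finset.range (n + 1), (k.factorial : ℚ)⁻¹ • (coeff (R := S) n) (Q ^ k) := by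
  simp [rexp]

lemma constantCoeff_rexp {S : Type*} [Ring S] [Algebra ℚ S] {Q : PowerSeries S}
    (hQ : constantCoeff (R := S) Q = 0) : constantCoeff (R := S) (rexp Q) = 1 := by
  have h := coeff_rexp Q 0
  rw [PowerSeries.coeff_zero_eq_constantCoeff] at h
  simpa using h

lemma psD_pow {S : Type*} [Ring S] {Q : PowerSeries S} (h : Q * psD Q = psD Q * Q) (k : ℕ) :
    psD (Q ^ (k + 1)) = (k + 1) • (psD Q * Q ^ k) := by
  have hc : Commute (psD Q) Q := h.symm
  induction k with
  | zero => simp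
  | succ k ih =>
    rw [pow_succ, psD_mul, ih, smul_mul_assoc, mul_assoc, ← pow_succ,
      ((hc.pow_right (k + 1)).symm.eq : Q ^ (k+1) * psD Q = psD Q * Q ^ (k+1)),
      succ_nsmul, succ_nsmul, succ_nsmul]

lemma psD_rexp {S : Type*} [Ring S] [Algebra ℚ S] {Q : PowerSeries S}
    (h0 : constantCoeff (R := S) Q = 0) (h : Q * psD Q = psD Q * Q) :
    psD (rexp Q) = psD Q * rexp Q := by
  ext n
  have hL : coeff (R := S) n (psD (rexp Q))
      = ∑ k ∈ range (n + 1), (k.factorial : ℚ)⁻¹ • coeff (R := S) n (psD Q * Q ^ k) := by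
    rw [coeff_psD, coeff_rexp, smul_sum, Finset.sum_range_succ']
    have last0 : (n+1) • ((((0:ℕ).factorial : ℚ))⁻¹ • coeff (R := S) (n+1) (Q ^ 0)) = 0 := by
      simp [coeff_one]
    rw [last0, add_zero]
    refine Finset.sum_congr rfl fun k hk => ?_
    have e2 : (n+1) • coeff (R := S) (n+1) (Q ^ (k+1)) = (k+1) • coeff (R := S) n (psD Q * Q ^ k) := by
      rw [← coeff_psD, psD_pow h k, map_nsmul]
    rw [smul_comm, e2, ← Nat.cast_smul_eq_nsmul ℚ (k+1), smul_smul]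
    congr 1
    have hk1 : ((k:ℚ)+1) ≠ 0 := by positivity
    have hkf : (k.factorial : ℚ) ≠ 0 := Nat.cast_ne_zero.2 k.factorial_ne_zero
    rw [Nat.factorial_succ]
    push_cast
    field_simp
  have hR : coeff (R := S) n (psD Q * rexp Q)
      = ∑ k ∈ range (n + 1), (k.factorial : ℚ)⁻¹ • coeff (R := S) n (psD Q * Q ^ k) := by
    rw [coeff_mul]
    have key : ∀ p ∈ antidiagonal n, coeff (R := S) p.1 (psD Q) * coeff (R := S) p.2 (rexp Q)
        = ∑ k ∈ range (n+1), (k.factorial : ℚ)⁻¹ • (coeff (R := S) p.1 (psD Q) * coeff (R := S) p.2 (Q ^ k)) := by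
      intro p hp
      rw [Finset.HasAntidiagonal.mem_antidiagonal] at hp
      rw [coeff_rexp, Finset.mul_sum]
      have hsub : range (p.2 + 1) ⊆ range (n + 1) := Finset.range_subset_range.2 (by omega)
      rw [Finset.sum_subset hsub]
      · refine Finset.sum_congr rfl fun k hk => ?_
        rw [mul_smul_comm]
      · intro k hk hk2
        rw [Finset.mem_range] at hk hk2
        rw [coeff_pow_eq_zero' h0 (by omega), smul_zero, mul_zero]
    rw [Finset.sum_congr rfl key, Finset.sum_comm]
    refine Finset.sum_congr rfl fun k hk => ?_
    rw [← Finset.smul_sum, ← coeff_mul]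
  rw [hL, hR]

lemma ode_unique {A : Type*} [CommRing A] [Algebra ℚ A] {f g h : PowerSeries A}
    (hf : psD f = h * f) (hg : psD g = h * g)
    (h0 : constantCoeff (R := A) f = constantCoeff (R := A) g) : f = g := by
  ext n
  induction n using Nat.strong_induction_on with
  | _ n ih =>
    match n with
    | 0 => simpa [← PowerSeries.coeff_zero_eq_constantCoeff] using h0
    | Nat.succ m =>
      have e1 : (m+1) • coeff (R := A) (m+1) f = (m+1) • coeff (R := A) (m+1) g := by
        rw [← coeff_psD, ← coeff_psD, hf, hg, coeff_mul, coeff_mul]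
        refine Finset.sum_congr rfl fun p hp => ?_
        rw [Finset.HasAntidiagonal.mem_antidiagonal] at hp
        rw [ih p.2 (by omega)]
      have hq : ((m:ℚ)+1) ≠ 0 := by positivity
      rw [← Nat.cast_smul_eq_nsmul ℚ, ← Nat.cast_smul_eq_nsmul ℚ] at e1
      have e2 := congrArg (fun x => (((m+1:ℕ)):ℚ)⁻¹ • x) e1
      simpa [smul_smul, inv_mul_cancel₀ hq] using e2

/-- The entrywise identification of power series of matrices with matrices of power series. -/
noncomputable def eMat {A : Type*} [CommRing A] {ι : Type*} [Fintype ι] [DecidableEq ι] :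
    PowerSeries (Matrix ι ι A) →+* Matrix ι ι (PowerSeries A) where
  toFun X := Matrix.of fun i j => PowerSeries.mk fun n => coeff (R := Matrix ι ι A) n X i j
  map_one' := by
    refine Matrix.ext fun i j => PowerSeries.ext fun n => ?_
    by_cases hij : i = j <;> by_cases hn : n = 0 <;>
      simp [hij, hn, PowerSeries.coeff_one, Matrix.one_apply]
  map_mul' X Y := by
    refine Matrix.ext fun i j => PowerSeries.ext fun n => ?_
    rw [Matrix.mul_apply, map_sum]
    simp only [Matrix.of_apply, PowerSeries.coeff_mk, coeff_mul, Matrix.sum_apply,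
      Matrix.mul_apply, Finset.sum_mul, Finset.mul_sum]
    rw [Finset.sum_comm]
  map_zero' := by
    refine Matrix.ext fun i j => PowerSeries.ext fun n => ?_; simp
  map_add' X Y := by
    refine Matrix.ext fun i j => PowerSeries.ext fun n => ?_; simp

lemma eMat_apply {A : Type*} [CommRing A] {ι : Type*} [Fintype ι] [DecidableEq ι]
    (X : PowerSeries (Matrix ι ι A)) (i j : ι) (n : ℕ) :
    coeff (R := A) n (eMat X i j) = coeff (R := Matrix ι ι A) n X i j := by
  simp [eMat]

lemma eMat_psD {A : Type*} [CommRing A] {ι : Type*} [Fintype ι] [DecidableEq ι]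
    (X : PowerSeries (Matrix ι ι A)) :
    eMat (psD X) = (eMat X).map (fun p => psD p) := by
  refine Matrix.ext fun i j => PowerSeries.ext fun n => ?_
  rw [Matrix.map_apply, coeff_psD, eMat_apply, eMat_apply, coeff_psD, Matrix.smul_apply]

lemma trace_eMat_psD {A : Type*} [CommRing A] {ι : Type*} [Fintype ι] [DecidableEq ι]
    (X : PowerSeries (Matrix ι ι A)) :
    Matrix.trace (eMat (psD X)) = psD (PowerSeries.mk fun n => Matrix.trace (coeff (R := _) n X)) := by
  refine PowerSeries.ext fun n => ?_
  simp only [Matrix.trace, Matrix.diag, map_sum, coeff_psD, PowerSeries.coeff_mk, smul_sum]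
  refine Finset.sum_congr rfl fun i _ => ?_
  rw [eMat_apply, coeff_psD, Matrix.smul_apply]

lemma psD_prod {A : Type*} [CommRing A] {κ : Type*} [DecidableEq κ] (s : Finset κ)
    (f : κ → PowerSeries A) :
    psD (∏ i ∈ s, f i) = ∑ i ∈ s, psD (f i) * ∏ j ∈ s.erase i, f j := by
  induction s using Finset.induction_on with
  | empty => simp [psD_one]
  | @insert a s ha ih =>
    rw [Finset.prod_insert ha, psD_mul, ih, Finset.sum_insert ha, Finset.erase_insert ha]
    congr 1
    rw [Finset.mul_sum]
    refine Finset.sum_congr rfl fun i hi => ?_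
    have hai : a ≠ i := fun h => ha (h ▸ hi)
    rw [Finset.erase_insert_of_ne hai,
      Finset.prod_insert (fun h => ha (Finset.mem_of_mem_erase h)), mul_left_comm]

lemma psD_det {A : Type*} [CommRing A] {ι : Type*} [Fintype ι] [DecidableEq ι]
    (M : Matrix ι ι (PowerSeries A)) :
    psD M.det = Matrix.trace (M.adjugate * M.map (fun p => psD p)) := by
  have step1 : psD M.det = ∑ i, (M.updateCol i fun r => psD (M r i)).det := by
    rw [Matrix.det_apply, map_sum]
    have e1 : ∀ σ : Equiv.Perm ι, psD (Equiv.Perm.sign σ • ∏ i, M (σ i) i)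
        = ∑ i, Equiv.Perm.sign σ • (psD (M (σ i) i) * ∏ j ∈ Finset.univ.erase i, M (σ j) j) := by
      intro σ
      rw [Units.smul_def, AddMonoidHom.map_zsmul, psD_prod, Finset.smul_sum]
      simp [Units.smul_def]
    rw [Finset.sum_congr rfl fun σ _ => e1 σ, Finset.sum_comm]
    refine Finset.sum_congr rfl fun i _ => ?_
    rw [Matrix.det_apply]
    refine Finset.sum_congr rfl fun σ _ => ?_
    congr 1
    rw [← Finset.mul_prod_erase Finset.univ _ (Finset.mem_univ i)]
    congr 1
    · rw [Matrix.updateCol_apply, if_pos rfl]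
    · refine Finset.prod_congr rfl fun j hj => ?_
      rw [Matrix.updateCol_apply, if_neg (Finset.ne_of_mem_erase hj)]
  rw [step1]
  have e2 : ∀ i : ι, (M.updateCol i fun r => psD (M r i)).det
      = (M.adjugate.mulVec fun r => psD (M r i)) i := by
    intro i
    rw [← Matrix.cramer_apply, Matrix.cramer_eq_adjugate_mulVec]
  rw [Finset.sum_congr rfl fun i _ => e2 i]
  simp [Matrix.trace, Matrix.mulVec, Matrix.mul_apply, Matrix.diag, Matrix.map_apply,
    dotProduct]

lemma det_rexp {A : Type*} [CommRing A] [Algebra ℚ A] {ι : Type*} [Fintype ι] [DecidableEq ι]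
    (N : PowerSeries (Matrix ι ι A)) (h0 : constantCoeff (R := _) N = 0)
    (hcomm : ∀ m n : ℕ, coeff (R := _) m N * coeff (R := _) n N = coeff (R := _) n N * coeff (R := _) m N) :
    (eMat (rexp N)).det = rexp (PowerSeries.mk fun n => Matrix.trace (coeff (R := _) n N)) := by
  set T : PowerSeries A := PowerSeries.mk fun n => Matrix.trace (coeff (R := _) n N) with hT
  have hNcomm : N * psD N = psD N * N := by
    refine PowerSeries.ext fun n => ?_
    have hswap := Finset.Nat.sum_antidiagonal_swap (n := n)
      (f := fun p => (coeff (R := Matrix ι ι A) p.1) N * (coeff (R := Matrix ι ι A) p.2) (psD N))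
    have hswap' : ∑ p ∈ antidiagonal n,
          (coeff (R := Matrix ι ι A) p.2) N * (coeff (R := Matrix ι ι A) p.1) (psD N)
        = ∑ p ∈ antidiagonal n,
          (coeff (R := Matrix ι ι A) p.1) N * (coeff (R := Matrix ι ι A) p.2) (psD N) := by
      simpa using hswap
    rw [coeff_mul, coeff_mul, ← hswap']
    refine Finset.sum_congr rfl fun p hp => ?_
    rw [coeff_psD, mul_smul_comm, smul_mul_assoc, hcomm]
  have hE : psD (rexp N) = psD N * rexp N := psD_rexp h0 hNcomm
  have hDm : (eMat (rexp N)).map (fun p => psD p) = eMat (psD N) * eMat (rexp N) := by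
    rw [← eMat_psD, hE, map_mul]
  have htr : constantCoeff (R := A) T = 0 := by
    have : coeff (R := A) 0 T = 0 := by
      rw [hT, PowerSeries.coeff_mk, PowerSeries.coeff_zero_eq_constantCoeff, h0, Matrix.trace_zero]
    rwa [PowerSeries.coeff_zero_eq_constantCoeff] at this
  have hdet : psD (eMat (rexp N)).det = psD T * (eMat (rexp N)).det := by
    rw [psD_det, hDm, ← Matrix.mul_assoc, Matrix.trace_mul_comm, ← Matrix.mul_assoc,
      Matrix.mul_adjugate, Matrix.smul_mul, Matrix.one_mul, Matrix.trace_smul, trace_eMat_psD,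
      smul_eq_mul, mul_comm]
  have hgrow : psD (rexp T) = psD T * rexp T := psD_rexp htr (mul_comm _ _)
  have hcc : constantCoeff (R := A) (eMat (rexp N)).det = constantCoeff (R := A) (rexp T) := by
    have hmap : (constantCoeff (R := A)).mapMatrix (eMat (rexp N)) = 1 := by
      ext i j
      rw [RingHom.mapMatrix_apply, Matrix.map_apply, ← PowerSeries.coeff_zero_eq_constantCoeff,
        eMat_apply, PowerSeries.coeff_zero_eq_constantCoeff, constantCoeff_rexp h0]
    rw [RingHom.map_det, hmap, Matrix.det_one, constantCoeff_rexp htr]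
  exact ode_unique hdet hgrow hcc

namespace Stmt9Aux

variable (G : Type*) [CommGroup G] [Finite G] (H : Subgroup G)

/-- The inclusion-induced ring homomorphism `ℂ[H] → ℂ[G]`. -/
@[reducible] noncomputable def phi0 : MonoidAlgebra ℂ ↥H →+* MonoidAlgebra ℂ G :=
  MonoidAlgebra.mapDomainRingHom ℂ H.subtype

/-- The `ℂ[H]`-algebra structure on `ℂ[G]`. -/
@[reducible] noncomputable def algBase :
    Algebra (MonoidAlgebra ℂ ↥H) (MonoidAlgebra ℂ G) := (phi0 G H).toAlgebra

/-- The `ℂ[H]⟦u⟧`-algebra structure on `ℂ[G]⟦u⟧`. -/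
@[reducible] noncomputable def algPS :
    Algebra (PowerSeries (MonoidAlgebra ℂ ↥H)) (PowerSeries (MonoidAlgebra ℂ G)) :=
  (PowerSeries.map (phi0 G H)).toAlgebra

noncomputable def ftQ : Fintype (G ⧸ H) := Fintype.ofFinite _

noncomputable def deQ : DecidableEq (G ⧸ H) := Classical.decEq _

attribute [local instance] algBase algPS ftQ deQ

lemma mk_out_mul (i : G ⧸ H) (h : ↥H) :
    (QuotientGroup.mk (Quotient.out i * (h : G)) : G ⧸ H) = i := by
  conv_rhs => rw [← QuotientGroup.out_eq' i]
  refine (QuotientGroup.eq.mpr ?_).symm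
  have e : (Quotient.out i : G)⁻¹ * (Quotient.out i * (h : G)) = (h : G) := by group
  rw [e]; exact h.2

lemma mk_eq_iff (g g' : G) :
    (QuotientGroup.mk g : G ⧸ H) = QuotientGroup.mk g' ↔ g⁻¹ * g' ∈ H :=
  QuotientGroup.eq

theorem Finsupp.equivFunOnFinite_symm_apply_toFun {α M : Type*} [Zero M] [Finite α] (f : α → M)
    (a : α) : (Finsupp.equivFunOnFinite.symm f) a = f a := rfl

/-- The `i`-component map `ℂ[G] → ℂ[H]`. -/
noncomputable def rho (i : G ⧸ H) : MonoidAlgebra ℂ G →+ MonoidAlgebra ℂ ↥H where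
  toFun x := MonoidAlgebra.ofCoeff
    (Finsupp.equivFunOnFinite.symm fun h : ↥H => x.coeff (Quotient.out i * (h : G)))
  map_zero' := by
    refine MonoidAlgebra.ext (Finsupp.ext fun h => ?_)
    simp
  map_add' x y := by
    refine MonoidAlgebra.ext (Finsupp.ext fun h => ?_)
    simp [MonoidAlgebra.coeff_add]

lemma rho_apply (i : G ⧸ H) (x : MonoidAlgebra ℂ G) (h : ↥H) :
    (rho G H i x).coeff h = x.coeff (Quotient.out i * (h : G)) := by
  simp [rho]

/-- Reassembly of components. -/
noncomputable def sig (c : (G ⧸ H) → MonoidAlgebra ℂ ↥H) : MonoidAlgebra ℂ G :=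
  ∑ i : G ⧸ H, phi0 G H (c i) * MonoidAlgebra.single (Quotient.out i) 1

lemma phi0_def (y : MonoidAlgebra ℂ ↥H) :
    (phi0 G H y).coeff = Finsupp.mapDomain (fun h : ↥H => (h : G)) y.coeff := rfl

lemma phi0_apply_coe (y : MonoidAlgebra ℂ ↥H) (h : ↥H) : (phi0 G H y).coeff ((h : G)) = y.coeff h := by
  rw [phi0_def]
  exact Finsupp.mapDomain_apply Subtype.coe_injective y.coeff h

lemma phi0_apply_of_not_mem (y : MonoidAlgebra ℂ ↥H) (g : G) (hg : g ∉ H) :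
    (phi0 G H y).coeff g = 0 := by
  rw [phi0_def]
  exact Finsupp.mapDomain_notin_range y.coeff g (by rintro ⟨h, rfl⟩; exact hg h.2)

lemma rho_sig (c : (G ⧸ H) → MonoidAlgebra ℂ ↥H) (i : G ⧸ H) :
    rho G H i (sig G H c) = c i := by
  refine MonoidAlgebra.ext (Finsupp.ext fun h => ?_)
  rw [rho_apply, sig, MonoidAlgebra.coeff_sum, Finsupp.finset_sum_apply]
  rw [Finset.sum_eq_single i]
  · rw [MonoidAlgebra.mul_single_apply, mul_one]
    have e : Quotient.out i * (h : G) * (Quotient.out i)⁻¹ = (h : G) := by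
      rw [mul_comm (Quotient.out i) ((h : G)), mul_inv_cancel_right]
    rw [e, phi0_apply_coe]
  · intro j _ hj
    rw [MonoidAlgebra.mul_single_apply, mul_one]
    rw [phi0_apply_of_not_mem]
    intro m
    apply hj
    have e : Quotient.out i * (h : G) * (Quotient.out j)⁻¹
        = (Quotient.out j)⁻¹ * (Quotient.out i * (h : G)) := by
      rw [mul_comm]
    rw [e] at m
    have : (QuotientGroup.mk (Quotient.out j) : G ⧸ H)
        = QuotientGroup.mk (Quotient.out i * (h : G)) := QuotientGroup.eq.mpr m
    rw [QuotientGroup.out_eq', mk_out_mul] at this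
    exact this
  · intro hi
    exact absurd (Finset.mem_univ i) hi

lemma sig_rho (x : MonoidAlgebra ℂ G) : (sig G H fun i => rho G H i x) = x := by
  refine MonoidAlgebra.ext (Finsupp.ext fun g => ?_)
  rw [sig, MonoidAlgebra.coeff_sum, Finsupp.finset_sum_apply]
  rw [Finset.sum_eq_single (QuotientGroup.mk g : G ⧸ H)]
  · rw [MonoidAlgebra.mul_single_apply, mul_one]
    have hmem : g * (Quotient.out (QuotientGroup.mk g : G ⧸ H))⁻¹ ∈ H := by
      have h1 : (QuotientGroup.mk (Quotient.out (QuotientGroup.mk g : G ⧸ H)) : G ⧸ H)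
          = QuotientGroup.mk g := by rw [QuotientGroup.out_eq']
      have h2 := (mk_eq_iff G H _ _).mp h1
      have e : (Quotient.out (QuotientGroup.mk g : G ⧸ H))⁻¹ * g
          = g * (Quotient.out (QuotientGroup.mk g : G ⧸ H))⁻¹ := mul_comm _ _
      rwa [e] at h2
    have e2 : g * (Quotient.out (QuotientGroup.mk g : G ⧸ H))⁻¹
        = ((⟨_, hmem⟩ : ↥H) : G) := rfl
    rw [e2, phi0_apply_coe, rho_apply]
    congr 1
    show Quotient.out (QuotientGroup.mk g : G ⧸ H)
        * (g * (Quotient.out (QuotientGroup.mk g : G ⧸ H))⁻¹) = g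
    rw [mul_comm g, mul_inv_cancel_left]
  · intro j _ hj
    rw [MonoidAlgebra.mul_single_apply, mul_one]
    rw [phi0_apply_of_not_mem]
    intro m
    apply hj
    have e : g * (Quotient.out j)⁻¹ = (Quotient.out j)⁻¹ * g := mul_comm _ _
    rw [e] at m
    have : (QuotientGroup.mk (Quotient.out j) : G ⧸ H) = QuotientGroup.mk g :=
      QuotientGroup.eq.mpr m
    rw [QuotientGroup.out_eq'] at this
    exact this
  · intro hi
    exact absurd (Finset.mem_univ _) hi

lemma sig_smul (s : MonoidAlgebra ℂ ↥H) (c : (G ⧸ H) → MonoidAlgebra ℂ ↥H) :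
    (sig G H fun i => s * c i) = phi0 G H s * sig G H c := by
  rw [sig, sig, Finset.mul_sum]
  refine Finset.sum_congr rfl fun j _ => ?_
  rw [map_mul, mul_assoc]

lemma rho_phi0_mul (i : G ⧸ H) (s : MonoidAlgebra ℂ ↥H) (x : MonoidAlgebra ℂ G) :
    rho G H i (phi0 G H s * x) = s * rho G H i x := by
  conv_lhs => rw [← sig_rho G H x, ← sig_smul, rho_sig]

/-- The representation of `ℂ[G]` over `ℂ[H]` in the coset basis. -/
noncomputable def reprH :
    MonoidAlgebra ℂ G ≃ₗ[MonoidAlgebra ℂ ↥H] ((G ⧸ H) →₀ MonoidAlgebra ℂ ↥H) where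
  toFun x := Finsupp.equivFunOnFinite.symm fun i => rho G H i x
  map_add' x y := by
    refine Finsupp.ext fun i => ?_
    rw [Finsupp.add_apply, Finsupp.equivFunOnFinite_symm_apply_toFun,
      Finsupp.equivFunOnFinite_symm_apply_toFun, Finsupp.equivFunOnFinite_symm_apply_toFun,
      map_add]
  map_smul' s x := by
    refine Finsupp.ext fun i => ?_
    rw [RingHom.id_apply, Finsupp.smul_apply, Finsupp.equivFunOnFinite_symm_apply_toFun,
      Finsupp.equivFunOnFinite_symm_apply_toFun, smul_eq_mul]
    exact rho_phi0_mul G H i s x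
  invFun c := sig G H fun i => c i
  left_inv x := sig_rho G H x
  right_inv c := by
    dsimp only
    refine Finsupp.ext fun i => ?_
    rw [Finsupp.equivFunOnFinite_symm_apply_toFun, rho_sig]

/-- The coset basis of `ℂ[G]` over `ℂ[H]`. -/
noncomputable def bH : Module.Basis (G ⧸ H) (MonoidAlgebra ℂ ↥H) (MonoidAlgebra ℂ G) :=
  Module.Basis.ofRepr (reprH G H)

lemma sig_ite (j : G ⧸ H) (z : MonoidAlgebra ℂ ↥H) :
    (sig G H fun i => if j = i then z else 0)
      = phi0 G H z * MonoidAlgebra.single (Quotient.out j) 1 := by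
  rw [sig, Finset.sum_eq_single j]
  · rw [if_pos rfl]
  · intro b _ hb
    rw [if_neg (Ne.symm hb), map_zero, zero_mul]
  · intro hj
    exact absurd (Finset.mem_univ _) hj

lemma bH_repr_apply (x : MonoidAlgebra ℂ G) (i : G ⧸ H) :
    (bH G H).repr x i = rho G H i x := by
  rw [bH]
  exact Finsupp.equivFunOnFinite_symm_apply_toFun _ _

lemma bH_apply (j : G ⧸ H) :
    bH G H j = MonoidAlgebra.single (Quotient.out j) 1 := by
  rw [bH, Module.Basis.coe_ofRepr]
  show sig G H (fun i => (Finsupp.single j (1 : MonoidAlgebra ℂ ↥H)) i) = _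
  have e : (sig G H fun i => (Finsupp.single j (1 : MonoidAlgebra ℂ ↥H)) i)
      = sig G H fun i => if j = i then (1 : MonoidAlgebra ℂ ↥H) else 0 := by
    congr 1
    funext i
    exact Finsupp.single_apply
  rw [e, sig_ite, map_one, one_mul]

/-- The representation of `ℂ[G]⟦u⟧` over `ℂ[H]⟦u⟧` in the coset basis. -/
noncomputable def reprPS :
    PowerSeries (MonoidAlgebra ℂ G) ≃ₗ[PowerSeries (MonoidAlgebra ℂ ↥H)]
      ((G ⧸ H) →₀ PowerSeries (MonoidAlgebra ℂ ↥H)) where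
  toFun P := Finsupp.equivFunOnFinite.symm fun i =>
    PowerSeries.mk fun n => rho G H i (coeff (R := MonoidAlgebra ℂ G) n P)
  map_add' P Q := by
    refine Finsupp.ext fun i => ?_
    rw [Finsupp.add_apply, Finsupp.equivFunOnFinite_symm_apply_toFun,
      Finsupp.equivFunOnFinite_symm_apply_toFun, Finsupp.equivFunOnFinite_symm_apply_toFun]
    refine PowerSeries.ext fun n => ?_
    rw [map_add, PowerSeries.coeff_mk, map_add, map_add, PowerSeries.coeff_mk,
      PowerSeries.coeff_mk]
  map_smul' Q P := by
    refine Finsupp.ext fun i => ?_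
    rw [RingHom.id_apply, Finsupp.smul_apply, Finsupp.equivFunOnFinite_symm_apply_toFun,
      Finsupp.equivFunOnFinite_symm_apply_toFun, smul_eq_mul]
    refine PowerSeries.ext fun n => ?_
    have hsmul : Q • P = PowerSeries.map (phi0 G H) Q * P := rfl
    rw [PowerSeries.coeff_mk, hsmul, coeff_mul, coeff_mul, map_sum]
    refine Finset.sum_congr rfl fun p _ => ?_
    rw [PowerSeries.coeff_map, rho_phi0_mul, PowerSeries.coeff_mk]
  invFun c := PowerSeries.mk fun n => sig G H fun i => coeff (R := MonoidAlgebra ℂ ↥H) n (c i)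
  left_inv P := by
    dsimp only
    refine PowerSeries.ext fun n => ?_
    rw [PowerSeries.coeff_mk]
    have e : (sig G H fun i => coeff (R := MonoidAlgebra ℂ ↥H) n
        ((Finsupp.equivFunOnFinite.symm fun i =>
          PowerSeries.mk fun m => rho G H i (coeff (R := MonoidAlgebra ℂ G) m P)) i))
        = sig G H fun i => rho G H i (coeff (R := MonoidAlgebra ℂ G) n P) := by
      congr 1
      funext i
      rw [Finsupp.equivFunOnFinite_symm_apply_toFun, PowerSeries.coeff_mk]
    rw [e, sig_rho]
  right_inv c := by
    dsimp only
    refine Finsupp.ext fun i => ?_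
    rw [Finsupp.equivFunOnFinite_symm_apply_toFun]
    refine PowerSeries.ext fun n => ?_
    rw [PowerSeries.coeff_mk, PowerSeries.coeff_mk, rho_sig]

/-- The coset basis of `ℂ[G]⟦u⟧` over `ℂ[H]⟦u⟧`. -/
noncomputable def BPS : Module.Basis (G ⧸ H) (PowerSeries (MonoidAlgebra ℂ ↥H))
    (PowerSeries (MonoidAlgebra ℂ G)) :=
  Module.Basis.ofRepr (reprPS G H)

lemma BPS_repr_apply (P : PowerSeries (MonoidAlgebra ℂ G)) (i : G ⧸ H) (n : ℕ) :
    coeff (R := MonoidAlgebra ℂ ↥H) n ((BPS G H).repr P i)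
      = rho G H i (coeff (R := MonoidAlgebra ℂ G) n P) := by
  rw [BPS]
  have e : (reprPS G H) P i = PowerSeries.mk fun n => rho G H i (coeff (R := MonoidAlgebra ℂ G) n P) :=
    Finsupp.equivFunOnFinite_symm_apply_toFun _ _
  rw [show ((Module.Basis.ofRepr (reprPS G H)).repr P) = reprPS G H P from rfl, e, PowerSeries.coeff_mk]

lemma BPS_apply (j : G ⧸ H) :
    BPS G H j = PowerSeries.C (R := MonoidAlgebra ℂ G)
      (MonoidAlgebra.single (Quotient.out j) 1) := by
  rw [BPS, Module.Basis.coe_ofRepr]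
  show (PowerSeries.mk fun n => sig G H fun i =>
    coeff (R := MonoidAlgebra ℂ ↥H) n ((Finsupp.single j (1 : PowerSeries (MonoidAlgebra ℂ ↥H))) i)) = _
  refine PowerSeries.ext fun n => ?_
  rw [PowerSeries.coeff_mk, PowerSeries.coeff_C]
  have e : (sig G H fun i =>
        coeff (R := MonoidAlgebra ℂ ↥H) n ((Finsupp.single j (1 : PowerSeries (MonoidAlgebra ℂ ↥H))) i))
      = sig G H fun i => if j = i then coeff (R := MonoidAlgebra ℂ ↥H) n 1 else 0 := by
    congr 1
    funext i
    rw [Finsupp.single_apply, apply_ite (coeff (R := MonoidAlgebra ℂ ↥H) n), map_zero]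
  rw [e]
  by_cases hn : n = 0
  · have e2 : (sig G H fun i => if j = i then coeff (R := MonoidAlgebra ℂ ↥H) n 1 else 0)
        = sig G H fun i => if j = i then (1 : MonoidAlgebra ℂ ↥H) else 0 := by
      congr 1
      funext i
      rw [hn, PowerSeries.coeff_zero_eq_constantCoeff, map_one]
    rw [e2, sig_ite, map_one, one_mul, if_pos hn]
  · have e2 : (sig G H fun i => if j = i then coeff (R := MonoidAlgebra ℂ ↥H) n 1 else 0)
        = sig G H fun i => if j = i then (0 : MonoidAlgebra ℂ ↥H) else 0 := by
      congr 1
      funext i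
      rw [PowerSeries.coeff_one, if_neg hn]
    rw [e2, sig_ite, map_zero, zero_mul, if_neg hn]

/-- Multiplication on `ℂ[G]`, as matrices over `ℂ[H]` in the coset basis. -/
noncomputable def psi : MonoidAlgebra ℂ G →+* Matrix (G ⧸ H) (G ⧸ H) (MonoidAlgebra ℂ ↥H) where
  toFun x := LinearMap.toMatrix (bH G H) (bH G H) (LinearMap.mulLeft (MonoidAlgebra ℂ ↥H) x)
  map_one' := by
    rw [LinearMap.mulLeft_one, LinearMap.toMatrix_id]
  map_mul' x y := by
    rw [LinearMap.mulLeft_mul, LinearMap.toMatrix_comp (bH G H) (bH G H) (bH G H)]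
  map_zero' := by
    rw [LinearMap.mulLeft_zero_eq_zero, map_zero]
  map_add' x y := by
    have e : LinearMap.mulLeft (MonoidAlgebra ℂ ↥H) (x + y)
        = LinearMap.mulLeft (MonoidAlgebra ℂ ↥H) x + LinearMap.mulLeft (MonoidAlgebra ℂ ↥H) y := by
      refine LinearMap.ext fun z => ?_
      simp [add_mul]
    rw [e, map_add]

lemma psi_apply (x : MonoidAlgebra ℂ G) (i j : G ⧸ H) :
    psi G H x i j = rho G H i (x * MonoidAlgebra.single (Quotient.out j) 1) := by
  show (LinearMap.toMatrix (bH G H) (bH G H) (LinearMap.mulLeft (MonoidAlgebra ℂ ↥H) x)) i j = _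
  rw [LinearMap.toMatrix_apply, bH_apply, LinearMap.mulLeft_apply]
  show (reprH G H) (x * MonoidAlgebra.single (Quotient.out j) 1) i = _
  exact Finsupp.equivFunOnFinite_symm_apply_toFun _ _

lemma psi_comm (x y : MonoidAlgebra ℂ G) : psi G H x * psi G H y = psi G H y * psi G H x := by
  rw [← map_mul, ← map_mul, mul_comm]

/-- Bridge: the matrix of multiplication by `Q` on `ℂ[G]⟦u⟧`, coefficientwise. -/
lemma toMatrix_mulLeft_coeff (Q : PowerSeries (MonoidAlgebra ℂ G)) (n : ℕ) (i j : G ⧸ H) :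
    coeff (R := MonoidAlgebra ℂ ↥H) n
        ((LinearMap.toMatrix (BPS G H) (BPS G H)
          (LinearMap.mulLeft (PowerSeries (MonoidAlgebra ℂ ↥H)) Q)) i j)
      = psi G H (coeff (R := MonoidAlgebra ℂ G) n Q) i j := by
  rw [LinearMap.toMatrix_apply, LinearMap.mulLeft_apply, BPS_apply, BPS_repr_apply,
    PowerSeries.coeff_mul_C, psi_apply]

lemma toMatrix_mulLeft_eq_eMat (Q : PowerSeries (MonoidAlgebra ℂ G)) :
    LinearMap.toMatrix (BPS G H) (BPS G H)
        (LinearMap.mulLeft (PowerSeries (MonoidAlgebra ℂ ↥H)) Q)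
      = eMat (PowerSeries.map (psi G H) Q) := by
  refine Matrix.ext fun i j => PowerSeries.ext fun n => ?_
  rw [toMatrix_mulLeft_coeff, eMat_apply, PowerSeries.coeff_map]

lemma map_psi_psExp (P : PowerSeries (MonoidAlgebra ℂ G)) :
    PowerSeries.map (psi G H) (psExp P) = rexp (PowerSeries.map (psi G H) P) := by
  refine PowerSeries.ext fun n => ?_
  rw [PowerSeries.coeff_map]
  have e1 : coeff (R := MonoidAlgebra ℂ G) n (psExp P)
      = ∑ k ∈ Finset.range (n + 1),
          (k.factorial : ℚ)⁻¹ • (coeff (R := MonoidAlgebra ℂ G) n) (P ^ k) := by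
    simp [psExp]
  rw [e1, coeff_rexp, map_sum]
  refine Finset.sum_congr rfl fun k _ => ?_
  rw [map_rat_smul, ← map_pow, PowerSeries.coeff_map]

end Stmt9Aux

/-- The trace map `T_{G/H} : ℂ[G]⟦u⟧ → ℂ[H]⟦u⟧`: the trace, over `ℂ[H]⟦u⟧`, of the
multiplication-by-`P` endomorphism of `ℂ[G]⟦u⟧`, the module structure coming from the
(coefficientwise) inclusion-induced ring homomorphism `ℂ[H]⟦u⟧ → ℂ[G]⟦u⟧`. -/
noncomputable def psTrace (G : Type*) [CommGroup G] (H : Subgroup G)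
    (P : PowerSeries (MonoidAlgebra ℂ G)) : PowerSeries (MonoidAlgebra ℂ ↥H) :=
  letI : Algebra (PowerSeries (MonoidAlgebra ℂ ↥H)) (PowerSeries (MonoidAlgebra ℂ G)) :=
    (PowerSeries.map (MonoidAlgebra.mapDomainRingHom ℂ H.subtype)).toAlgebra
  LinearMap.trace (PowerSeries (MonoidAlgebra ℂ ↥H)) (PowerSeries (MonoidAlgebra ℂ G))
    (LinearMap.mulLeft (PowerSeries (MonoidAlgebra ℂ ↥H)) P)

/-- The norm map `N_{G/H} : ℂ[G]⟦u⟧ → ℂ[H]⟦u⟧`: the determinant, over `ℂ[H]⟦u⟧`, of the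
multiplication-by-`P` endomorphism of `ℂ[G]⟦u⟧`. -/
noncomputable def psNorm (G : Type*) [CommGroup G] (H : Subgroup G)
    (P : PowerSeries (MonoidAlgebra ℂ G)) : PowerSeries (MonoidAlgebra ℂ ↥H) :=
  letI : Algebra (PowerSeries (MonoidAlgebra ℂ ↥H)) (PowerSeries (MonoidAlgebra ℂ G)) :=
    (PowerSeries.map (MonoidAlgebra.mapDomainRingHom ℂ H.subtype)).toAlgebra
  LinearMap.det (LinearMap.mulLeft (PowerSeries (MonoidAlgebra ℂ ↥H)) P)

/-- Let `G` be a finite abelian group and `H ≤ G`.  For every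
`P ∈ ℂ[G]⟦u⟧` with zero constant coefficient, `T_{G/H}(P)` has zero constant coefficient and
`N_{G/H}(exp_{ℂ[G]}(P)) = exp_{ℂ[H]}(T_{G/H}(P))`. -/
theorem stmt9 (G : Type*) [CommGroup G] [Finite G] (H : Subgroup G)
    (P : PowerSeries (MonoidAlgebra ℂ G))
    (hP : PowerSeries.constantCoeff (R := MonoidAlgebra ℂ G) P = 0) :
    PowerSeries.constantCoeff (R := MonoidAlgebra ℂ ↥H) (psTrace G H P) = 0 ∧
      psNorm G H (psExp P) = psExp (psTrace G H P) := by

  letI := Stmt9Aux.algBase G H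
  letI := Stmt9Aux.algPS G H
  letI := Stmt9Aux.ftQ G H
  letI := Stmt9Aux.deQ G H
  have hP0 : coeff (R := MonoidAlgebra ℂ G) 0 P = 0 := by
    rw [PowerSeries.coeff_zero_eq_constantCoeff]; exact hP
  have htr : psTrace G H P = PowerSeries.mk fun n =>
      Matrix.trace (Stmt9Aux.psi G H (coeff (R := MonoidAlgebra ℂ G) n P)) := by
    have h1 : psTrace G H P
        = Matrix.trace (LinearMap.toMatrix (Stmt9Aux.BPS G H) (Stmt9Aux.BPS G H)
            (LinearMap.mulLeft (PowerSeries (MonoidAlgebra ℂ ↥H)) P)) := by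
      show LinearMap.trace (PowerSeries (MonoidAlgebra ℂ ↥H)) (PowerSeries (MonoidAlgebra ℂ G))
          (LinearMap.mulLeft (PowerSeries (MonoidAlgebra ℂ ↥H)) P) = _
      exact LinearMap.trace_eq_matrix_trace _ (Stmt9Aux.BPS G H) _
    rw [h1]
    refine PowerSeries.ext fun n => ?_
    rw [PowerSeries.coeff_mk]
    simp only [Matrix.trace, Matrix.diag, map_sum]
    refine Finset.sum_congr rfl fun i _ => ?_
    rw [Stmt9Aux.toMatrix_mulLeft_coeff]
  constructor
  · rw [htr, ← PowerSeries.coeff_zero_eq_constantCoeff, PowerSeries.coeff_mk, hP0, map_zero,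
      Matrix.trace_zero]
  · have h0' : constantCoeff (R := Matrix (G ⧸ H) (G ⧸ H) (MonoidAlgebra ℂ ↥H))
        (PowerSeries.map (Stmt9Aux.psi G H) P) = 0 := by
      rw [← PowerSeries.coeff_zero_eq_constantCoeff, PowerSeries.coeff_map, hP0, map_zero]
    have hcomm' : ∀ m n : ℕ,
        coeff (R := _) m (PowerSeries.map (Stmt9Aux.psi G H) P)
            * coeff (R := _) n (PowerSeries.map (Stmt9Aux.psi G H) P)
          = coeff (R := _) n (PowerSeries.map (Stmt9Aux.psi G H) P)
            * coeff (R := _) m (PowerSeries.map (Stmt9Aux.psi G H) P) := by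
      intro m n
      rw [PowerSeries.coeff_map, PowerSeries.coeff_map, ← map_mul, ← map_mul, mul_comm]
    have hdet : psNorm G H (psExp P) = (eMat (rexp (PowerSeries.map (Stmt9Aux.psi G H) P))).det := by
      have h2 : psNorm G H (psExp P)
          = (LinearMap.toMatrix (Stmt9Aux.BPS G H) (Stmt9Aux.BPS G H)
              (LinearMap.mulLeft (PowerSeries (MonoidAlgebra ℂ ↥H)) (psExp P))).det := by
        show LinearMap.det (LinearMap.mulLeft (PowerSeries (MonoidAlgebra ℂ ↥H)) (psExp P)) = _
        exact (LinearMap.det_toMatrix (Stmt9Aux.BPS G H) _).symm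
      rw [h2, Stmt9Aux.toMatrix_mulLeft_eq_eMat, Stmt9Aux.map_psi_psExp]
    rw [hdet, det_rexp _ h0' hcomm', htr]
    have e : (PowerSeries.mk fun n =>
          Matrix.trace (coeff (R := _) n (PowerSeries.map (Stmt9Aux.psi G H) P)))
        = PowerSeries.mk fun n => Matrix.trace (Stmt9Aux.psi G H (coeff (R := MonoidAlgebra ℂ G) n P)) := by
      refine PowerSeries.ext fun n => ?_
      rw [PowerSeries.coeff_mk, PowerSeries.coeff_mk, PowerSeries.coeff_map]
    rw [e]
    rfl
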